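/- Let C ∈ ℝ^{s×n}, P = I - C†C, and Q = A^T J A be symmetric positive definite for A ∈ ℝ^{m×n} and a signature matrix J. Then (PQP)†QP = P. -/

import Mathlib

open Matrix

/-- `Cd` is the Moore–Penrose inverse of `C` (the four Penrose equations). -/
def IsMoorePenrose {m n : Type*} [Fintype m] [Fintype n]
    (C : Matrix m n ℝ) (Cd : Matrix n m ℝ) : Prop :=
  C * Cd * C = C ∧ Cd * C * Cd = Cd ∧ (C * Cd)ᵀ = C * Cd ∧ (Cd * C)ᵀ = Cd * C

/-- The signature matrix `J = diag(I_p, -I_q)`. -/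
def sig (p q : ℕ) : Matrix (Fin p ⊕ Fin q) (Fin p ⊕ Fin q) ℝ :=
  Matrix.fromBlocks 1 0 0 (-1)

lemma aux_pqp {n : ℕ} (Q P Md : Matrix (Fin n) (Fin n) ℝ)
    (hQ : Q.PosDef) (hPsym : Pᵀ = P) (hPP : P * P = P)
    (m1 : (P * Q * P) * Md * (P * Q * P) = P * Q * P)
    (m2 : Md * (P * Q * P) * Md = Md)
    (m3 : ((P * Q * P) * Md)ᵀ = (P * Q * P) * Md)
    (m4 : (Md * (P * Q * P))ᵀ = Md * (P * Q * P)) :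
    Md * Q * P = P := by
  set M := P * Q * P with hM
  have hMP : M * P = M := by rw [hM, Matrix.mul_assoc, hPP]
  have hPM : P * M = M := by rw [hM, ← Matrix.mul_assoc, ← Matrix.mul_assoc, hPP]
  have hMMdP : M * Md * P = M * Md := by
    have h : (P * (M * Md))ᵀ = M * Md * P := by
      rw [Matrix.transpose_mul, hPsym, m3]
    rw [← h, ← Matrix.mul_assoc, hPM, m3]
  have hMdP : Md * P = Md := by
    calc Md * P = Md * (M * Md * P) := by rw [← Matrix.mul_assoc, ← Matrix.mul_assoc, m2]
    _ = Md * (M * Md) := by rw [hMMdP]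
    _ = Md := by rw [← Matrix.mul_assoc, m2]
  have hMdMP : Md * M * P = Md * M := by rw [Matrix.mul_assoc, hMP]
  have hPMdM : P * (Md * M) = Md * M := by
    have h := congrArg transpose hMdMP
    rwa [Matrix.transpose_mul, hPsym, m4] at h
  set N := P - Md * M with hN
  have hNsym : Nᵀ = N := by rw [hN, Matrix.transpose_sub, hPsym, m4]
  have hMN : M * N = 0 := by
    rw [hN, Matrix.mul_sub, hMP, ← Matrix.mul_assoc, m1, sub_self]
  have hPN : P * N = N := by
    rw [hN, Matrix.mul_sub, hPP, hPMdM]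
  have hNP : N * P = N := by
    have h := congrArg transpose hPN
    rwa [Matrix.transpose_mul, hNsym, hPsym] at h
  have key : P * (Q * N) = 0 := by
    have h := hMN
    rw [hM] at h
    simpa [Matrix.mul_assoc, hPN] using h
  have hNQN : N * Q * N = 0 := by
    calc N * Q * N = N * P * (Q * N) := by rw [hNP, Matrix.mul_assoc]
    _ = N * (P * (Q * N)) := by rw [Matrix.mul_assoc]
    _ = 0 := by rw [key, Matrix.mul_zero]
  have hNv : ∀ x : Fin n → ℝ, N *ᵥ x = 0 := by
    intro x
    by_contra h
    have h0 : (N *ᵥ x) ⬝ᵥ Q *ᵥ (N *ᵥ x) = 0 := by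
      calc (N *ᵥ x) ⬝ᵥ Q *ᵥ (N *ᵥ x)
          = (x ᵥ* N) ⬝ᵥ (Q * N) *ᵥ x := by
            rw [Matrix.mulVec_mulVec, ← Matrix.mulVec_transpose, hNsym]
      _ = x ⬝ᵥ N *ᵥ ((Q * N) *ᵥ x) := by rw [← Matrix.dotProduct_mulVec]
      _ = x ⬝ᵥ (N * (Q * N)) *ᵥ x := by rw [Matrix.mulVec_mulVec]
      _ = 0 := by rw [← Matrix.mul_assoc, hNQN]; simp
    have := hQ.dotProduct_mulVec_pos h
    rw [show star (N *ᵥ x) = N *ᵥ x from rfl] at this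
    exact absurd h0 (ne_of_gt this)
  have hN0 : N = 0 := by
    ext i j
    have := congrFun (hNv (Pi.single j 1)) i
    simpa [Matrix.mulVec_single] using this
  have hMdM : Md * M = P := (sub_eq_zero.mp hN0).symm
  calc Md * Q * P = Md * P * Q * P := by rw [hMdP]
  _ = Md * (P * Q * P) := by rw [Matrix.mul_assoc Md P Q, Matrix.mul_assoc Md (P * Q) P]
  _ = P := by rw [← hM, hMdM]

/-- With `P = I - C†C`, `Q = AᵀJA` positive definite, `(PQP)† Q P = P`. -/
theorem pqp_pinv_QP {p q s n : ℕ}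
    (A : Matrix (Fin p ⊕ Fin q) (Fin n) ℝ)
    (C : Matrix (Fin s) (Fin n) ℝ) (Cd : Matrix (Fin n) (Fin s) ℝ)
    (hC : IsMoorePenrose C Cd)
    (hQ : (Aᵀ * sig p q * A).PosDef)
    (Md : Matrix (Fin n) (Fin n) ℝ)
    (hMd : IsMoorePenrose
      ((1 - Cd * C) * (Aᵀ * sig p q * A) * (1 - Cd * C)) Md) :
    Md * (Aᵀ * sig p q * A) * (1 - Cd * C) = 1 - Cd * C := by
  obtain ⟨h1, h2, h3, h4⟩ := hC
  obtain ⟨m1, m2, m3, m4⟩ := hMd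
  have hPsym : (1 - Cd * C)ᵀ = 1 - Cd * C := by
    rw [Matrix.transpose_sub, Matrix.transpose_one, h4]
  have hPP : (1 - Cd * C) * (1 - Cd * C) = 1 - Cd * C := by
    have hCdC : Cd * C * (Cd * C) = Cd * C := by
      rw [← Matrix.mul_assoc, h2]
    rw [Matrix.mul_sub, Matrix.sub_mul, Matrix.sub_mul, hCdC]
    simp
  exact aux_pqp (Aᵀ * sig p q * A) (1 - Cd * C) Md hQ hPsym hPP m1 m2 m3 m4
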